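/- For τ>0 and σ>1, there exists a constant C>0 such that M_{p+q}^{τ,σ} ≤ C^{p^σ + q^σ} · M_p^{τ2^{σ-1},σ} · M_q^{τ2^{σ-1},σ} for all p, q ∈ ℕ. -/

import Mathlib

open Real

/-- The sequence `M_p^{τ,σ} = p^{τ p^σ}`, with `M_0 = 1`. -/
noncomputable def Mseq (τ σ : ℝ) (p : ℕ) : ℝ := (p : ℝ) ^ (τ * (p : ℝ) ^ σ)

/-- Convexity: `(a+b)^σ ≤ 2^(σ-1) (a^σ + b^σ)` for nonneg reals and `σ ≥ 1`. -/
lemma conv_rpow {a b σ : ℝ} (ha : 0 ≤ a) (hb : 0 ≤ b) (hσ : 1 ≤ σ) :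
    (a + b) ^ σ ≤ 2 ^ (σ - 1) * (a ^ σ + b ^ σ) := by
  lift a to NNReal using ha
  lift b to NNReal using hb
  exact_mod_cast NNReal.rpow_add_le_mul_rpow_add_rpow a b hσ

/-- Key logarithmic estimate: for `P, Q ≥ 1`,
`P^σ log(P+Q) ≤ P^σ log P + (P^σ + Q^σ)`. -/
lemma log_add_est {P Q σ : ℝ} (hP : 1 ≤ P) (hQ : 1 ≤ Q) (hσ : 1 ≤ σ) :
    P ^ σ * Real.log (P + Q) ≤ P ^ σ * Real.log P + (P ^ σ + Q ^ σ) := by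
  have hP0 : 0 < P := lt_of_lt_of_le one_pos hP
  have hQ0 : 0 < Q := lt_of_lt_of_le one_pos hQ
  have hlog : Real.log (P + Q) = Real.log P + Real.log ((P + Q) / P) := by
    rw [Real.log_div (by positivity) (ne_of_gt hP0)]
    ring
  have h1 : Real.log ((P + Q) / P) ≤ Q / P := by
    have := Real.log_le_sub_one_of_pos (x := (P + Q) / P) (by positivity)
    have : Real.log ((P + Q) / P) ≤ (P + Q) / P - 1 := this
    have heq : (P + Q) / P - 1 = Q / P := by field_simp; ring
    linarith [heq ▸ this]
  have h2 : P ^ σ * (Q / P) = P ^ (σ - 1) * Q := by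
    rw [Real.rpow_sub hP0, Real.rpow_one]
    field_simp
  have h3 : P ^ (σ - 1) * Q ≤ P ^ σ + Q ^ σ := by
    rcases le_total Q P with h | h
    · have : P ^ (σ - 1) * Q ≤ P ^ (σ - 1) * P :=
        mul_le_mul_of_nonneg_left h (by positivity)
      have hPP : P ^ (σ - 1) * P = P ^ σ := by
        rw [← Real.rpow_add_one hP0.ne' (σ - 1)]
        norm_num
      nlinarith [Real.rpow_nonneg hQ0.le σ]
    · have : P ^ (σ - 1) ≤ Q ^ (σ - 1) :=
        Real.rpow_le_rpow hP0.le h (by linarith)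
      have h4 : P ^ (σ - 1) * Q ≤ Q ^ (σ - 1) * Q :=
        mul_le_mul_of_nonneg_right this hQ0.le
      have hQQ : Q ^ (σ - 1) * Q = Q ^ σ := by
        rw [← Real.rpow_add_one hQ0.ne' (σ - 1)]
        norm_num
      nlinarith [Real.rpow_nonneg hP0.le σ]
  have h5 : P ^ σ * Real.log ((P + Q) / P) ≤ P ^ σ + Q ^ σ := by
    calc P ^ σ * Real.log ((P + Q) / P) ≤ P ^ σ * (Q / P) :=
          mul_le_mul_of_nonneg_left h1 (by positivity)
      _ = P ^ (σ - 1) * Q := h2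
      _ ≤ P ^ σ + Q ^ σ := h3
  rw [hlog]
  nlinarith

theorem stmt1 (τ σ : ℝ) (hτ : 0 < τ) (hσ : 1 < σ) :
    ∃ C > (0 : ℝ), ∀ p q : ℕ,
      Mseq τ σ (p + q) ≤
        C ^ ((p : ℝ) ^ σ + (q : ℝ) ^ σ) *
          Mseq (τ * 2 ^ (σ - 1)) σ p * Mseq (τ * 2 ^ (σ - 1)) σ q := by
  set K : ℝ := τ * 2 ^ (σ - 1) with hKdef
  have h2σ : (1 : ℝ) ≤ 2 ^ (σ - 1) := by
    rw [← Real.rpow_zero 2]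
    exact Real.rpow_le_rpow_of_exponent_le one_le_two (by linarith)
  have hK0 : 0 < K := by positivity
  have hτK : τ ≤ K := by nlinarith
  refine ⟨Real.exp (2 * K), Real.exp_pos _, ?_⟩
  have hC1 : (1 : ℝ) ≤ Real.exp (2 * K) := by
    rw [← Real.exp_zero]
    exact Real.exp_le_exp.mpr (by positivity)
  -- `Mseq _ _ 0 = 1`
  have hM0 : ∀ t : ℝ, Mseq t σ 0 = 1 := by
    intro t
    simp [Mseq, Real.zero_rpow (by positivity : σ ≠ 0)]
  -- monotonicity in τ
  have hle : ∀ n : ℕ, Mseq τ σ n ≤ Mseq K σ n := by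
    intro n
    rcases Nat.eq_zero_or_pos n with rfl | hn
    · rw [hM0, hM0]
    · have h1n : (1 : ℝ) ≤ (n : ℝ) := by exact_mod_cast hn
      exact Real.rpow_le_rpow_of_exponent_le h1n
        (mul_le_mul_of_nonneg_right hτK (Real.rpow_nonneg (by positivity) σ))
  have hMnn : ∀ n : ℕ, 0 ≤ Mseq K σ n := fun n => Real.rpow_nonneg (Nat.cast_nonneg n) _
  have hCpow : ∀ x : ℝ, 0 ≤ x → 1 ≤ Real.exp (2 * K) ^ x := by
    intro x hx
    rw [← Real.rpow_zero (Real.exp (2 * K))]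
    exact Real.rpow_le_rpow_of_exponent_le hC1 hx
  intro p q
  rcases Nat.eq_zero_or_pos p with rfl | hp
  · simp only [Nat.cast_zero, zero_add, hM0]
    rw [Real.zero_rpow (by positivity : σ ≠ 0), zero_add, mul_one]
    calc Mseq τ σ q ≤ Mseq K σ q := hle q
      _ ≤ Real.exp (2 * K) ^ ((q : ℝ) ^ σ) * Mseq K σ q :=
          le_mul_of_one_le_left (hMnn q)
            (hCpow _ (Real.rpow_nonneg (Nat.cast_nonneg q) σ))
  rcases Nat.eq_zero_or_pos q with rfl | hq
  · simp only [Nat.cast_zero, add_zero, hM0]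
    rw [Real.zero_rpow (by positivity : σ ≠ 0), add_zero, mul_one]
    calc Mseq τ σ p ≤ Mseq K σ p := hle p
      _ ≤ Real.exp (2 * K) ^ ((p : ℝ) ^ σ) * Mseq K σ p :=
          le_mul_of_one_le_left (hMnn p)
            (hCpow _ (Real.rpow_nonneg (Nat.cast_nonneg p) σ))
  -- main case: `p, q ≥ 1`
  have hP : (1 : ℝ) ≤ (p : ℝ) := by exact_mod_cast hp
  have hQ : (1 : ℝ) ≤ (q : ℝ) := by exact_mod_cast hq
  set P : ℝ := (p : ℝ) with hPdef
  set Q : ℝ := (q : ℝ) with hQdef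
  have hP0 : 0 < P := lt_of_lt_of_le one_pos hP
  have hQ0 : 0 < Q := lt_of_lt_of_le one_pos hQ
  have hPQ0 : 0 < P + Q := by linarith
  have hcast : ((p + q : ℕ) : ℝ) = P + Q := by push_cast; rfl
  set a : ℝ := P ^ σ with hadef
  set b : ℝ := Q ^ σ with hbdef
  have ha0 : 0 ≤ a := Real.rpow_nonneg hP0.le σ
  have hb0 : 0 ≤ b := Real.rpow_nonneg hQ0.le σ
  -- rewrite everything in terms of `exp`
  have hLHS : Mseq τ σ (p + q) = Real.exp (Real.log (P + Q) * (τ * (P + Q) ^ σ)) := by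
    rw [Mseq, hcast, Real.rpow_def_of_pos hPQ0]
  have hRHS : Real.exp (2 * K) ^ (a + b) * Mseq K σ p * Mseq K σ q
      = Real.exp (2 * K * (a + b) + Real.log P * (K * a) + Real.log Q * (K * b)) := by
    rw [Mseq, Mseq, ← hPdef, ← hQdef, ← hadef, ← hbdef,
      Real.rpow_def_of_pos hP0, Real.rpow_def_of_pos hQ0,
      Real.rpow_def_of_pos (Real.exp_pos _), Real.log_exp, ← Real.exp_add, ← Real.exp_add]
  rw [hLHS, hRHS]
  apply Real.exp_le_exp.mpr
  -- the key inequalities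
  have hlognn : 0 ≤ Real.log (P + Q) := Real.log_nonneg (by linarith)
  have hconv : (P + Q) ^ σ ≤ 2 ^ (σ - 1) * (a + b) :=
    conv_rpow hP0.le hQ0.le hσ.le
  have s1 : Real.log (P + Q) * (τ * (P + Q) ^ σ) ≤ Real.log (P + Q) * (K * (a + b)) := by
    apply mul_le_mul_of_nonneg_left _ hlognn
    rw [hKdef, mul_assoc]
    exact mul_le_mul_of_nonneg_left hconv hτ.le
  have h1 : a * Real.log (P + Q) ≤ a * Real.log P + (a + b) := log_add_est hP hQ hσ.le
  have h2 : b * Real.log (P + Q) ≤ b * Real.log Q + (b + a) := by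
    have := log_add_est hQ hP hσ.le
    rwa [add_comm Q P] at this
  have h1' : K * (a * Real.log (P + Q)) ≤ K * (a * Real.log P + (a + b)) :=
    mul_le_mul_of_nonneg_left h1 hK0.le
  have h2' : K * (b * Real.log (P + Q)) ≤ K * (b * Real.log Q + (b + a)) :=
    mul_le_mul_of_nonneg_left h2 hK0.le
  nlinarith [s1, h1', h2']
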